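/- Let N ≥ 1, 0 < p < 1, 0 < q < p with 1 - 2p + q > 0. Define α = log((p-q)/(1-2p+q)), α₀ = (N-1)·log((1-p)/p) + N·α, β = log(q/(p-q)) - α, Z = (1+exp α)^N + exp(α₀)·(1+exp(α+β))^N, and P(l₀,…,l_N) = (1/Z) exp(α₀ l₀ + α Σ_{i=1}^N lᵢ + β l₀ Σ_{i=1}^N lᵢ) on {0,1}^{N+1}. Then the expectation of the central default indicator, E[L₀] = Σ_{(l₀,…,l_N): l₀=1} P(l₀,…,l_N), equals p. -/

import Mathlib

/-- The real value of a Bernoulli (default) indicator. -/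
noncomputable def ind (b : Bool) : ℝ := if b then 1 else 0

lemma sum_exp_aux (N : ℕ) (c : ℝ) :
    (∑ g : Fin N → Bool, Real.exp (c * ∑ i, ind (g i))) = (1 + Real.exp c) ^ N := by
  have h : ∀ g : Fin N → Bool, Real.exp (c * ∑ i, ind (g i))
      = ∏ i : Fin N, Real.exp (c * ind (g i)) := by
    intro g
    rw [Finset.mul_sum, Real.exp_sum]
  simp_rw [h]
  rw [← Fintype.piFinset_univ,
    ← Finset.prod_univ_sum (fun _ : Fin N => (Finset.univ : Finset Bool))
      (fun _ b => Real.exp (c * ind b))]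
  simp [Fintype.sum_bool, ind, add_comm]

lemma filter_sum_aux (N : ℕ) (f : (Fin (N + 1) → Bool) → ℝ) :
    (∑ l ∈ Finset.univ.filter (fun l : Fin (N + 1) → Bool => l 0 = true), f l)
      = ∑ g : Fin N → Bool, f (Fin.cons true g) := by
  apply Finset.sum_nbij' (fun l => Fin.tail l) (fun g => Fin.cons true g)
  · intro a _; exact Finset.mem_univ _
  · intro b _; simp
  · intro a ha
    simp only [Finset.mem_filter] at ha
    rw [← ha.2]
    exact Fin.cons_self_tail a
  · intro b _; exact Fin.tail_cons _ _
  · intro a ha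
    simp only [Finset.mem_filter] at ha
    rw [← ha.2]
    rw [Fin.cons_self_tail a]

/-- In the Dandelion model with parameters `α = log((p-q)/(1-2p+q))`,
`α₀ = (N-1)log((1-p)/p) + Nα`, `β = log(q/(p-q)) - α` and partition function
`Z = (1+e^α)^N + e^{α₀}(1+e^{α+β})^N`, the expectation of the central default
indicator, `E[L₀] = Σ_{l₀=1} P(l₀,…,l_N)`, equals `p`. -/
theorem dandelion_central_marginal (N : ℕ) (hN : 1 ≤ N) (p q : ℝ)
    (hp0 : 0 < p) (hp1 : p < 1) (hq0 : 0 < q) (hqp : q < p)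
    (hpos : 1 - 2 * p + q > 0)
    (α α₀ β Z : ℝ)
    (hα : α = Real.log ((p - q) / (1 - 2 * p + q)))
    (hα₀ : α₀ = (N - 1 : ℝ) * Real.log ((1 - p) / p) + N * α)
    (hβ : β = Real.log (q / (p - q)) - α)
    (hZ : Z = (1 + Real.exp α) ^ N + Real.exp α₀ * (1 + Real.exp (α + β)) ^ N) :
    (∑ l ∈ Finset.univ.filter (fun l : Fin (N + 1) → Bool => l 0 = true),
        (1 / Z) * Real.exp (α₀ * ind (l 0) + α * (∑ i : Fin N, ind (l i.succ))
          + β * ind (l 0) * (∑ i : Fin N, ind (l i.succ)))) = p := by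
  have hpq : (0:ℝ) < p - q := by linarith
  have hd : (0:ℝ) < 1 - 2 * p + q := hpos
  have h1p : (0:ℝ) < 1 - p := by linarith
  -- basic exponential values
  have eα : Real.exp α = (p - q) / (1 - 2 * p + q) := by
    rw [hα]; exact Real.exp_log (by positivity)
  have eαβ : Real.exp (α + β) = q / (p - q) := by
    have : α + β = Real.log (q / (p - q)) := by rw [hβ]; ring
    rw [this]; exact Real.exp_log (by positivity)
  obtain ⟨M, rfl⟩ : ∃ M, N = M + 1 := ⟨N - 1, (Nat.succ_pred_eq_of_pos hN).symm⟩
  have eα₀ : Real.exp α₀ = ((1 - p) / p) ^ M * ((p - q) / (1 - 2 * p + q)) ^ (M + 1) := by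
    rw [hα₀, Real.exp_add]
    have h1 : ((M + 1 : ℕ) - 1 : ℝ) = (M : ℕ) := by push_cast; ring
    rw [h1]
    rw [Real.exp_nat_mul, Real.exp_nat_mul, Real.exp_log (by positivity), eα]
  -- reduce the sum
  rw [filter_sum_aux]
  simp only [Fin.cons_zero, Fin.cons_succ]
  have hone : ind true = 1 := rfl
  simp only [hone, mul_one, one_mul]
  have key : ∀ S : ℝ, Real.exp (α₀ + α * S + β * S)
      = Real.exp α₀ * Real.exp ((α + β) * S) := by
    intro S; rw [← Real.exp_add]; ring_nf
  simp_rw [key, ← mul_assoc]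
  rw [← Finset.mul_sum, sum_exp_aux]
  -- final algebra
  have hdne : (1 - 2 * p + q) ≠ 0 := ne_of_gt hd
  have hpne : p ≠ 0 := ne_of_gt hp0
  have hpqne : (p - q) ≠ 0 := ne_of_gt hpq
  have e1 : 1 + Real.exp α = (1 - p) / (1 - 2 * p + q) := by
    rw [eα, eq_div_iff hdne, add_mul, div_mul_cancel₀ _ hdne]; ring
  have e2 : 1 + Real.exp (α + β) = p / (p - q) := by
    rw [eαβ]; field_simp; ring
  have e3 : ((p - q) / (1 - 2 * p + q)) * (p / (p - q)) = p / (1 - 2 * p + q) := by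
    field_simp
  have e4 : ((1 - p) / p) * (p / (1 - 2 * p + q)) = (1 - p) / (1 - 2 * p + q) := by
    field_simp
  have hnum : Real.exp α₀ * (1 + Real.exp (α + β)) ^ (M + 1)
      = ((1 - p) / (1 - 2 * p + q)) ^ M * (p / (1 - 2 * p + q)) := by
    rw [eα₀, e2, mul_assoc, ← mul_pow, e3, pow_succ, ← mul_assoc, ← mul_pow, e4]
  have hZ' : Z = ((1 - p) / (1 - 2 * p + q)) ^ M * (1 / (1 - 2 * p + q)) := by
    rw [hZ, hnum, e1, pow_succ, ← mul_add, ← add_div]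
    ring_nf
  have hZne : Z ≠ 0 := by
    rw [hZ']; positivity
  rw [mul_assoc, hnum, mul_comm, mul_one_div, div_eq_iff hZne, hZ']
  ring
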